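/- Let G ∈ 𝔽_{q^m}^{k×n} have rank k and define ρ(V) = rank(G Yᵀ) where V = rowspace(Y). Then ρ satisfies the q-matroid axioms: 0 ≤ ρ(V) ≤ dim V, monotonicity, and submodularity ρ(V+W) + ρ(V∩W) ≤ ρ(V) + ρ(W). -/

import Mathlib

open Submodule Module

/-- The rank function represented by a matrix `G` over a field extension `K` of `F`:
`ρ(V)` is the `K`-dimension of the span of `{G·v̄ : v ∈ V}`, which equals
`rank (G Yᵀ)` whenever `V` is the row space of `Y`. -/
noncomputable def repRho {F K : Type*} [Field F] [Field K] [Algebra F K]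
    {k n : ℕ} (G : Matrix (Fin k) (Fin n) K) (V : Submodule F (Fin n → F)) : ℕ :=
  finrank K (span K
    ((fun v : Fin n → F => G.mulVec fun j => algebraMap F K (v j)) '' (V : Set (Fin n → F))))

section Aux
variable {F K : Type*} [Field F] [Field K] [Algebra F K] {k n : ℕ}
  (G : Matrix (Fin k) (Fin n) K)

/-- The `F`-linear map `v ↦ G · v̄`. -/
noncomputable def phiL : (Fin n → F) →ₗ[F] (Fin k → K) :=
  (G.mulVecLin.restrictScalars F).comp
    (LinearMap.pi fun j => (Algebra.linearMap F K).comp (LinearMap.proj j))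

lemma repRho_eq' (V : Submodule F (Fin n → F)) :
    repRho G V = finrank K (span K ((map (phiL G) V : Set (Fin k → K)))) := rfl

lemma spanK_sup (V W : Submodule F (Fin n → F)) :
    span K ((map (phiL G) (V ⊔ W) : Set (Fin k → K))) =
      span K ((map (phiL G) V : Set (Fin k → K))) ⊔
      span K ((map (phiL G) W : Set (Fin k → K))) := by
  rw [Submodule.map_sup]
  have h : (map (phiL G) V ⊔ map (phiL G) W : Submodule F (Fin k → K)) =
      span F ((map (phiL G) V : Set (Fin k → K)) ∪ (map (phiL G) W : Set (Fin k → K))) := by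
    rw [Submodule.span_union, Submodule.span_eq, Submodule.span_eq]
  rw [h, Submodule.span_span_of_tower, Submodule.span_union]

lemma spanK_mono {V W : Submodule F (Fin n → F)} (h : V ≤ W) :
    span K ((map (phiL G) V : Set (Fin k → K))) ≤
      span K ((map (phiL G) W : Set (Fin k → K))) :=
  span_mono (Submodule.map_mono h)

lemma repRho_le_finrank (V : Submodule F (Fin n → F)) :
    repRho G V ≤ finrank F V := by
  rw [repRho_eq']
  set d := finrank F V with hd
  obtain b := finBasis F V
  set s : Fin d → (Fin n → F) := fun i => (b i : Fin n → F) with hs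
  have hV : V = span F (Set.range s) := by
    conv_lhs => rw [← Submodule.map_subtype_top V]
    rw [← b.span_eq, Submodule.map_span]
    congr 1
    ext x; simp [hs, Set.range_comp]; exact Iff.rfl
  have h1 : span K ((map (phiL G) V : Set (Fin k → K))) ≤
      span K (Set.range (fun i => phiL G (s i))) := by
    rw [hV, Submodule.map_span]
    refine span_le.2 ?_
    refine (Submodule.span_le.2 ?_ :
      span F (phiL G '' Set.range s) ≤
        (span K (Set.range fun i => phiL G (s i))).restrictScalars F)
    intro x hx
    obtain ⟨y, ⟨i, rfl⟩, rfl⟩ := hx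
    exact subset_span ⟨i, rfl⟩
  calc finrank K (span K ((map (phiL G) V : Set (Fin k → K))))
      ≤ finrank K (span K (Set.range fun i => phiL G (s i))) :=
        Submodule.finrank_mono h1
    _ ≤ d := (finrank_range_le_card _).trans (by simp)
end Aux

/-- The rank function represented by a full-row-rank matrix over a finite field
extension satisfies the `q`-matroid axioms (R1)–(R3). -/
theorem stmt9 {F K : Type*} [Field F] [Fintype F] [Field K] [Fintype K] [Algebra F K]
    {k n : ℕ} (G : Matrix (Fin k) (Fin n) K) (hG : G.rank = k) :
    (∀ V : Submodule F (Fin n → F), repRho G V ≤ finrank F V) ∧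
    (∀ V W : Submodule F (Fin n → F), V ≤ W → repRho G V ≤ repRho G W) ∧
    (∀ V W : Submodule F (Fin n → F),
      repRho G (V ⊔ W) + repRho G (V ⊓ W) ≤ repRho G V + repRho G W) := by
  refine ⟨repRho_le_finrank G, ?_, ?_⟩
  · intro V W h
    rw [repRho_eq', repRho_eq']
    exact Submodule.finrank_mono (spanK_mono G h)
  · intro V W
    rw [repRho_eq', repRho_eq', repRho_eq', repRho_eq']
    set A := span K ((map (phiL G) V : Set (Fin k → K)))
    set B := span K ((map (phiL G) W : Set (Fin k → K)))
    have h1 : span K ((map (phiL G) (V ⊔ W) : Set (Fin k → K))) = A ⊔ B := spanK_sup G V W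
    have h2 : span K ((map (phiL G) (V ⊓ W) : Set (Fin k → K))) ≤ A ⊓ B :=
      le_inf (spanK_mono G inf_le_left) (spanK_mono G inf_le_right)
    calc finrank K (span K ((map (phiL G) (V ⊔ W) : Set (Fin k → K))))
          + finrank K (span K ((map (phiL G) (V ⊓ W) : Set (Fin k → K))))
        ≤ finrank K ↥(A ⊔ B) + finrank K ↥(A ⊓ B) := by
          rw [h1]; exact Nat.add_le_add_left (Submodule.finrank_mono h2) _
      _ = finrank K A + finrank K B := Submodule.finrank_sup_add_finrank_inf_eq A B
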